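/- Let p be a prime, G a group, and d ≥ 0. Suppose there is an injective homomorphism ι : ℤ/pℤ → A of (ℤ/pℤ)[G]-modules, where ℤ/pℤ carries the trivial G-action, and suppose A has projective dimension at most d as a (ℤ/pℤ)[G]-module. Then every injective (ℤ/pℤ)[G]-module has projective dimension at most d. -/

import Mathlib

open CategoryTheory

noncomputable section

/-- The group algebra `(ℤ/pℤ)[G]`. -/
abbrev GroupAlg (p : ℕ) (G : Type) [Group G] : Type := MonoidAlgebra (ZMod p) G

/-- The trivial `(ℤ/pℤ)[G]`-module `ℤ/pℤ`: the module `ℤ/pℤ` with the module structure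
obtained by restricting scalars along the augmentation `(ℤ/pℤ)[G] →+* ℤ/pℤ`
(so that every element of `G` acts as the identity). -/
def TrivMod (p : ℕ) (G : Type) [Group G] : ModuleCat.{0} (GroupAlg p G) :=
  (ModuleCat.restrictScalars
      ((MonoidAlgebra.lift (ZMod p) (ZMod p) G) 1).toRingHom).obj
    (ModuleCat.of (ZMod p) (ZMod p))

/-- `A` has projective dimension at most `d` over `R`:  there is an exact resolution
`0 ⟶ Q d ⟶ ⋯ ⟶ Q 0 ⟶ A ⟶ 0` with all the `Q i` projective. -/
def HasProjDimLE {R : Type} [Ring R] (A : ModuleCat.{0} R) (d : ℕ) : Prop :=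
  ∃ (Q : ℕ → ModuleCat.{0} R) (f : ∀ i, Q (i + 1) ⟶ Q i) (g : Q 0 ⟶ A),
    (∀ i, Projective (Q i)) ∧
    Function.Surjective g ∧
    Function.Exact (f 0) g ∧
    (∀ i, Function.Exact (f (i + 1)) (f i)) ∧
    (∀ i, d < i → Subsingleton (Q i))

namespace ProjDimAux

variable {R : Type} [Ring R]

lemma projective_of_subsingleton (M : ModuleCat.{0} R) [Subsingleton M] : Projective M := by
  refine ⟨fun {E X} f e he => ⟨0, ?_⟩⟩
  ext x
  have hx : x = 0 := Subsingleton.elim _ _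
  subst hx
  simp

lemma catProj_iff (M : ModuleCat.{0} R) : Projective M ↔ Module.Projective R M :=
  ⟨fun h => (IsProjective.iff_projective M).mpr (Projective.of_iso (Iso.refl M) h),
   fun h => Projective.of_iso (Iso.refl _) ((IsProjective.iff_projective M).mp h)⟩

lemma hasProjDimLE_of_projective (M : ModuleCat.{0} R) (h : Projective M) (d : ℕ) :
    HasProjDimLE M d := by
  refine ⟨fun i => Nat.casesOn i M (fun _ => ModuleCat.of R PUnit),
    fun i => Nat.casesOn i 0 (fun _ => 0), 𝟙 M, ?_, ?_, ?_, ?_, ?_⟩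
  · intro i
    cases i with
    | zero => exact h
    | succ j => exact projective_of_subsingleton _
  · exact fun x => ⟨x, rfl⟩
  · intro y
    constructor
    · intro hy
      refine ⟨0, ?_⟩
      simpa using hy.symm
    · rintro ⟨x, rfl⟩
      have hx : x = (0 : PUnit) := Subsingleton.elim _ _
      rw [hx]
      exact map_zero _
  · intro i y
    cases i with
    | zero =>
      constructor
      · intro _; exact ⟨0, Subsingleton.elim _ _⟩
      · intro _
        have hy : y = (0 : PUnit) := Subsingleton.elim _ _
        rw [hy]
        exact map_zero _
    | succ j =>
      constructor
      · intro _; exact ⟨0, Subsingleton.elim _ _⟩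
      · intro _; exact Subsingleton.elim _ _
  · intro i hi
    cases i with
    | zero => exact absurd hi (Nat.not_lt_zero d)
    | succ j => infer_instance

lemma projective_retract {M N : ModuleCat.{0} R} (s : M ⟶ N) (r : N ⟶ M)
    (hsr : ∀ x, r (s x) = x) (hN : Projective N) : Projective M := by
  refine ⟨fun {E X} f e he => ?_⟩
  haveI := hN
  obtain ⟨h, hh⟩ := Projective.factors (r ≫ f) e
  refine ⟨s ≫ h, ?_⟩
  ext x
  have := congrFun (congrArg (⇑) hh) (s x)
  simp only [ConcreteCategory.comp_apply, ModuleCat.hom_comp, LinearMap.coe_comp,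
    Function.comp_apply] at this ⊢
  rw [this, hsr]

lemma hasProjDimLE_prod {M N : ModuleCat.{0} R} {d : ℕ}
    (hM : HasProjDimLE M d) (hN : HasProjDimLE N d) :
    HasProjDimLE (ModuleCat.of R (M × N)) d := by
  obtain ⟨Q, f, g, hQ, hg, he0, he, hb⟩ := hM
  obtain ⟨Q', f', g', hQ', hg', he0', he', hb'⟩ := hN
  refine ⟨fun i => ModuleCat.of R (Q i × Q' i),
    fun i => ModuleCat.ofHom ((f i).hom.prodMap (f' i).hom),
    ModuleCat.ofHom (g.hom.prodMap g'.hom), ?_, ?_, ?_, ?_, ?_⟩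
  · intro i
    haveI : Module.Projective R (Q i) := (catProj_iff _).mp (hQ i)
    haveI : Module.Projective R (Q' i) := (catProj_iff _).mp (hQ' i)
    exact (catProj_iff _).mpr (inferInstanceAs (Module.Projective R (↑(Q i) × ↑(Q' i))))
  · rintro ⟨x, y⟩
    obtain ⟨a, ha⟩ := hg x
    obtain ⟨b, hb''⟩ := hg' y
    exact ⟨(a, b), by simp [ha, hb'']⟩
  · rintro ⟨x, y⟩
    constructor
    · intro hxy
      have h1 : g x = 0 := congrArg Prod.fst hxy
      have h2 : g' y = 0 := congrArg Prod.snd hxy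
      obtain ⟨a, ha⟩ := (he0 x).mp h1
      obtain ⟨b, hb''⟩ := (he0' y).mp h2
      exact ⟨(a, b), by simp [ha, hb'']⟩
    · rintro ⟨⟨a, b⟩, hab⟩
      have h1 : f 0 a = x := congrArg Prod.fst hab
      have h2 : f' 0 b = y := congrArg Prod.snd hab
      have hx : g x = 0 := (he0 x).mpr ⟨a, h1⟩
      have hy : g' y = 0 := (he0' y).mpr ⟨b, h2⟩
      exact Prod.ext hx hy
  · intro i
    rintro ⟨x, y⟩
    constructor
    · intro hxy
      have h1 : f i x = 0 := congrArg Prod.fst hxy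
      have h2 : f' i y = 0 := congrArg Prod.snd hxy
      obtain ⟨a, ha⟩ := (he i x).mp h1
      obtain ⟨b, hb''⟩ := (he' i y).mp h2
      exact ⟨(a, b), by simp [ha, hb'']⟩
    · rintro ⟨⟨a, b⟩, hab⟩
      have h1 : f (i+1) a = x := congrArg Prod.fst hab
      have h2 : f' (i+1) b = y := congrArg Prod.snd hab
      have hx : f i x = 0 := (he i x).mpr ⟨a, h1⟩
      have hy : f' i y = 0 := (he' i y).mpr ⟨b, h2⟩
      exact Prod.ext hx hy
  · intro i hi
    haveI := hb i hi
    haveI := hb' i hi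
    exact inferInstanceAs (Subsingleton (↑(Q i) × ↑(Q' i)))

lemma syzygy {N : ModuleCat.{0} R} {d : ℕ}
    (Q : ℕ → ModuleCat.{0} R) (f : ∀ i, Q (i+1) ⟶ Q i) (g : Q 0 ⟶ N)
    (hQ : ∀ i, Projective (Q i)) (he0 : Function.Exact (f 0) g)
    (he : ∀ i, Function.Exact (f (i+1)) (f i))
    (hb : ∀ i, d + 1 < i → Subsingleton (Q i)) :
    HasProjDimLE (ModuleCat.of R (LinearMap.ker g.hom)) d := by
  have hmem : ∀ x, f 0 x ∈ LinearMap.ker g.hom :=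
    fun x => LinearMap.mem_ker.mpr ((he0 (f 0 x)).mpr ⟨x, rfl⟩)
  refine ⟨fun i => Q (i+1), fun i => f (i+1),
    ModuleCat.ofHom (LinearMap.codRestrict (LinearMap.ker g.hom) (f 0).hom hmem), ?_, ?_, ?_, ?_, ?_⟩
  · intro i; exact hQ (i+1)
  · rintro ⟨x, hx⟩
    obtain ⟨y, hy⟩ := (he0 x).mp (LinearMap.mem_ker.mp hx)
    exact ⟨y, Subtype.ext hy⟩
  · intro y
    constructor
    · intro hy
      have : f 0 y = 0 := congrArg Subtype.val hy
      exact (he 0 y).mp this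
    · rintro ⟨x, rfl⟩
      exact Subtype.ext ((he 0 (f 1 x)).mpr ⟨x, rfl⟩)
  · intro i; exact he (i+1)
  · intro i hi; exact hb (i+1) (by omega)

lemma splice {M : ModuleCat.{0} R} {d : ℕ} (P : ModuleCat.{0} R) (hP : Projective P)
    (π : P ⟶ M) (hπ : Function.Surjective π)
    (hker : HasProjDimLE (ModuleCat.of R (LinearMap.ker π.hom)) d) :
    HasProjDimLE M (d+1) := by
  obtain ⟨Q, f, g, hQ, hg, he0, he, hb⟩ := hker
  refine ⟨fun i => Nat.casesOn i P Q,
    fun i => Nat.casesOn i (ModuleCat.ofHom ((LinearMap.ker π.hom).subtype ∘ₗ g.hom)) f,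
    π, ?_, hπ, ?_, ?_, ?_⟩
  · intro i
    cases i with
    | zero => exact hP
    | succ j => exact hQ j
  · intro y
    constructor
    · intro hy
      obtain ⟨q, hq⟩ := hg ⟨y, LinearMap.mem_ker.mpr hy⟩
      refine ⟨q, ?_⟩
      show ((LinearMap.ker π.hom).subtype (g q) : _) = y
      rw [hq]
      rfl
    · rintro ⟨q, rfl⟩
      exact (g q).2
  · intro i
    cases i with
    | zero =>
      intro y
      constructor
      · intro hy
        exact (he0 y).mp (Subtype.ext hy)
      · rintro ⟨x, rfl⟩
        have h0 : g (f 0 x) = 0 := (he0 (f 0 x)).mpr ⟨x, rfl⟩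
        show ((LinearMap.ker π.hom).subtype (g (f 0 x)) : _) = 0
        rw [h0]
        simp
    | succ j => exact he j
  · intro i hi
    cases i with
    | zero => omega
    | succ j => exact hb j (by omega)

lemma hasProjDimLE_retract (d : ℕ) : ∀ {M N : ModuleCat.{0} R}
    (s : M ⟶ N) (r : N ⟶ M), (∀ x, r (s x) = x) → HasProjDimLE N d → HasProjDimLE M d := by
  induction d with
  | zero =>
    rintro M N s r hrs ⟨Q, f, g, hQ, hg, he0, he, hb⟩
    haveI : Subsingleton (Q 1) := hb 1 Nat.one_pos
    have hginj : Function.Injective g := by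
      intro a b hab
      have : g (a - b) = 0 := by rw [map_sub, hab, sub_self]
      obtain ⟨x, hx⟩ := (he0 (a - b)).mp this
      have hx0 : x = 0 := Subsingleton.elim _ _
      subst hx0
      rw [map_zero] at hx
      have : a - b = 0 := hx.symm
      exact sub_eq_zero.mp this
    have e : (Q 0 : Type) ≃ₗ[R] N := LinearEquiv.ofBijective g.hom ⟨hginj, hg⟩
    have hNproj : Projective N := by
      rw [catProj_iff]
      haveI : Module.Projective R (Q 0) := (catProj_iff _).mp (hQ 0)
      exact Module.Projective.of_equiv e
    exact hasProjDimLE_of_projective M (projective_retract s r hrs hNproj) 0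
  | succ d ih =>
    rintro M N s r hrs ⟨Q, f, g, hQ, hg, he0, he, hb⟩
    have hK : HasProjDimLE (ModuleCat.of R (LinearMap.ker g.hom)) d :=
      syzygy Q f g hQ he0 he hb
    set π : Q 0 ⟶ M := g ≫ r with hπdef
    have hπ : Function.Surjective π := by
      intro m
      obtain ⟨q, hq⟩ := hg (s m)
      refine ⟨q, ?_⟩
      show r (g q) = m
      rw [hq, hrs]
    haveI : Epi g := (ModuleCat.epi_iff_surjective g).mpr hg
    set t : Q 0 ⟶ Q 0 := Projective.factorThru (π ≫ s) g with htdef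
    have ht : ∀ x, g (t x) = s (π x) := fun x =>
      congrFun (congrArg (⇑) (Projective.factorThru_comp (π ≫ s) g)) x
    -- L is a retract of ker g × Q 0
    have hmemσ : ∀ x : LinearMap.ker π.hom, t x ∈ LinearMap.ker g.hom := by
      rintro ⟨x, hx⟩
      have hx' : π x = 0 := LinearMap.mem_ker.mp hx
      have h2 : g (t x) = s (π x) := ht x
      rw [hx', map_zero] at h2
      exact LinearMap.mem_ker.mpr h2
    set σ : (ModuleCat.of R (LinearMap.ker π.hom)) ⟶
        (ModuleCat.of R (↥(LinearMap.ker g.hom) × ↑(Q 0))) :=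
      ModuleCat.ofHom (LinearMap.prod
        (LinearMap.codRestrict (LinearMap.ker g.hom) (t.hom ∘ₗ (LinearMap.ker π.hom).subtype)
          (fun x => hmemσ x))
        ((LinearMap.ker π.hom).subtype)) with hσdef
    set ρ0 : (↥(LinearMap.ker g.hom) × ↑(Q 0)) →ₗ[R] ↑(Q 0) :=
      (LinearMap.ker g.hom).subtype ∘ₗ LinearMap.fst R (↥(LinearMap.ker g.hom)) (↑(Q 0))
        + (LinearMap.id - t.hom) ∘ₗ LinearMap.snd R (↥(LinearMap.ker g.hom)) (↑(Q 0))
      with hρ0def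
    have hmemρ : ∀ z : ↥(LinearMap.ker g.hom) × ↑(Q 0), ρ0 z ∈ LinearMap.ker π.hom := by
      rintro ⟨⟨a, ha⟩, x⟩
      apply LinearMap.mem_ker.mpr
      have hπt : π (t x) = π x := by
        show r (g (t x)) = π x
        rw [ht x, hrs]
      have hπa : π a = 0 := by
        show r (g a) = 0
        rw [LinearMap.mem_ker.mp ha, map_zero]
      have : ρ0 (⟨a, ha⟩, x) = a + (x - t x) := rfl
      rw [this, map_add, hπa, map_sub, hπt, zero_add, sub_self]
    set ρm : (ModuleCat.of R (↥(LinearMap.ker g.hom) × ↑(Q 0))) ⟶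
        (ModuleCat.of R (LinearMap.ker π.hom)) :=
      ModuleCat.ofHom (LinearMap.codRestrict (LinearMap.ker π.hom) ρ0 hmemρ) with hρdef
    have hρσ : ∀ l, ρm (σ l) = l := by
      rintro ⟨l, hl⟩
      apply Subtype.ext
      show (t l : Q 0) + (l - t l) = l
      abel
    have hKQ := hasProjDimLE_prod hK (hasProjDimLE_of_projective (Q 0) (hQ 0) d)
    have hL : HasProjDimLE (ModuleCat.of R (LinearMap.ker π.hom)) d :=
      ih σ ρm hρσ hKQ
    exact splice (Q 0) (hQ 0) π hπ hL

end ProjDimAux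

namespace RepAux

open MonoidalCategory

variable {k G : Type} [Field k] [Group G]

lemma epi_hom_of_epi {X Y : Rep k G} (e : X ⟶ Y) [Epi e] : Function.Surjective e.hom := by
  exact (Rep.epi_iff_surjective e).mp inferInstance

lemma homEquiv_comp {I V E X : Rep k G} (h : I ⊗ V ⟶ E) (e : E ⟶ X) :
    Rep.tensorHomEquiv I V X (h ≫ e) = Rep.tensorHomEquiv I V E h ≫ (Rep.ihom I).map e := by
  rfl

lemma projective_tensor (V I : Rep k G) (hV : Projective V) : Projective (V ⊗ I) := by
  have hIV : Projective (I ⊗ V) := by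
    constructor
    intro E X fm e he
    have hsurj : Function.Surjective e.hom := epi_hom_of_epi e
    have hepi : Epi ((Rep.ihom I).map e) := by
      rw [Rep.epi_iff_surjective]
      intro φ
      obtain ⟨ψ, hψ⟩ := Module.projective_lifting_property e.hom.toLinearMap (φ : I.V →ₗ[k] X.V) hsurj
      exact ⟨ψ, hψ⟩
    haveI := hV
    obtain ⟨f'', hf''⟩ := Projective.factors (Rep.tensorHomEquiv I V X fm) ((Rep.ihom I).map e)
    refine ⟨(Rep.tensorHomEquiv I V E).symm f'', ?_⟩
    apply (Rep.tensorHomEquiv I V X).injective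
    rw [homEquiv_comp, Equiv.apply_symm_apply, hf'']
  exact Projective.of_iso (β_ I V) hIV

end RepAux


/-- If there is an injective homomorphism `ι : ℤ/pℤ → A` of
`(ℤ/pℤ)[G]`-modules out of the trivial module, and `A` has projective dimension at most
`d`, then every injective `(ℤ/pℤ)[G]`-module has projective dimension at most `d`. -/
theorem injective_hasProjDimLE_of_trivMod_embeds
    (p : ℕ) (hp : p.Prime) (G : Type) [Group G] (d : ℕ)
    (A : ModuleCat.{0} (GroupAlg p G))
    (ι : TrivMod p G ⟶ A) (hι : Function.Injective ι)
    (hA : HasProjDimLE A d) :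
    ∀ I : ModuleCat.{0} (GroupAlg p G), Injective I → HasProjDimLE I d := by
  haveI := Fact.mk hp
  intro I hI
  obtain ⟨Q, f, g, hQ, hg, he0, he, hb⟩ := hA
  set oM := Rep.ofModuleMonoidAlgebra (k := ZMod p) (G := G) with hoM
  set tMf := Rep.toModuleMonoidAlgebra (k := ZMod p) (G := G) with htM
  set I' : Rep (ZMod p) G := oM.obj I with hI'
  set TT : ModuleCat.{0} (GroupAlg p G) → ModuleCat.{0} (GroupAlg p G) :=
    fun M => tMf.obj (MonoidalCategory.tensorObj (oM.obj M) I') with hTT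
  let Tm : ∀ {M N : ModuleCat.{0} (GroupAlg p G)}, (M ⟶ N) → (TT M ⟶ TT N) :=
    fun {M N} φ => tMf.map (MonoidalCategory.whiskerRight (oM.map φ) I')
  -- exactness of the tensor functor
  have hTex : ∀ {M N P : ModuleCat.{0} (GroupAlg p G)} (φ : M ⟶ N) (ψ : N ⟶ P),
      Function.Exact φ ψ → Function.Exact (Tm φ) (Tm ψ) := by
    intro M N P φ ψ hexact
    exact Module.Flat.rTensor_exact (M := I'.V) (R := ZMod p)
      (f := (oM.map φ).hom.toLinearMap) (g := (oM.map ψ).hom.toLinearMap) hexact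
  have hTsurj : ∀ {M N : ModuleCat.{0} (GroupAlg p G)} (φ : M ⟶ N),
      Function.Surjective φ → Function.Surjective (Tm φ) := by
    intro M N φ hφ
    exact LinearMap.rTensor_surjective (g := (oM.map φ).hom.toLinearMap) I'.V hφ
  have hTproj : ∀ (M : ModuleCat.{0} (GroupAlg p G)), Projective M → Projective (TT M) := by
    intro M hM
    have h1 : Projective (oM.obj M) :=
      ((Rep.equivalenceModuleMonoidAlgebra (k := ZMod p) (G := G)).symm.map_projective_iff M).mpr hM
    have h2 : Projective (MonoidalCategory.tensorObj (oM.obj M) I') := RepAux.projective_tensor _ _ h1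
    exact ((Rep.equivalenceModuleMonoidAlgebra (k := ZMod p) (G := G)).map_projective_iff _).mpr h2
  have hTsub : ∀ (M : ModuleCat.{0} (GroupAlg p G)), Subsingleton M → Subsingleton (TT M) := by
    intro M hM
    haveI : Subsingleton (RestrictScalars (ZMod p) (GroupAlg p G) ↥M) := hM
    have hsub : Subsingleton (TensorProduct (ZMod p)
        (RestrictScalars (ZMod p) (GroupAlg p G) ↥M) I'.V) := by
      constructor
      have hz : ∀ z : TensorProduct (ZMod p)
          (RestrictScalars (ZMod p) (GroupAlg p G) ↥M) I'.V, z = 0 := by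
        intro z
        induction z using TensorProduct.induction_on with
        | zero => rfl
        | tmul m w =>
          rw [show m = 0 from Subsingleton.elim m 0, TensorProduct.zero_tmul]
        | add x y hx hy => rw [hx, hy, add_zero]
      intro a b
      rw [hz a, hz b]
    exact hsub
  -- the map `I ⟶ TT A`
  set oneT : ↥(TrivMod p G) := (1 : ZMod p) with honeT
  set a0 : (oM.obj A).V := (oM.map ι).hom oneT with ha0def
  have ha0 : a0 ≠ 0 := by
    intro h
    have h2 : ι oneT = ι 0 := by
      rw [map_zero]
      exact h
    have h3 : oneT = 0 := hι h2
    exact one_ne_zero (α := ZMod p) h3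
  have hsmul_triv : ∀ gg : G, (MonoidAlgebra.single gg (1 : ZMod p) : GroupAlg p G) • oneT = oneT := by
    intro gg
    show ((MonoidAlgebra.lift (ZMod p) (ZMod p) G) 1) (MonoidAlgebra.single gg (1 : ZMod p))
        • (1 : ZMod p) = (1 : ZMod p)
    rw [MonoidAlgebra.lift_single]
    simp
  have hinv : ∀ gg : G, ((oM.obj A).ρ gg) a0 = a0 := by
    intro gg
    show (Representation.ofModule (k := ZMod p) (G := G) ↥A) gg a0 = a0
    rw [Representation.ofModule, MonoidAlgebra.lift_symm_apply]
    show (MonoidAlgebra.single gg (1 : ZMod p) : GroupAlg p G) • (ι oneT) = ι oneT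
    rw [← map_smul, hsmul_triv]
  let u : I' ⟶ MonoidalCategory.tensorObj (oM.obj A) I' :=
    Rep.ofHom (ρ := I'.ρ) (σ := (MonoidalCategory.tensorObj (oM.obj A) I').ρ)
      ⟨TensorProduct.mk (ZMod p) (oM.obj A).V I'.V a0, fun gg => by
        apply LinearMap.ext
        intro x
        show TensorProduct.tmul (ZMod p) a0 ((I'.ρ gg) x)
            = TensorProduct.tmul (ZMod p) (((oM.obj A).ρ gg) a0) ((I'.ρ gg) x)
        rw [hinv gg]⟩
  have huinj : Function.Injective u.hom := by
    have h1 : Function.Injective (LinearMap.toSpanSingleton (ZMod p) (oM.obj A).V a0) := by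
      intro c c' hcc
      by_contra hne
      have hz : (c - c') • a0 = 0 := by
        rw [sub_smul, sub_eq_zero]
        exact hcc
      have h4 := congrArg (fun z => (c - c')⁻¹ • z) hz
      simp only [smul_smul, inv_mul_cancel₀ (sub_ne_zero.mpr hne), one_smul, smul_zero] at h4
      exact ha0 h4
    have h2 : Function.Injective
        (LinearMap.rTensor I'.V (LinearMap.toSpanSingleton (ZMod p) (oM.obj A).V a0)) :=
      Module.Flat.rTensor_preserves_injective_linearMap _ h1
    have h3 : ⇑u.hom = ⇑(LinearMap.rTensor I'.V
          (LinearMap.toSpanSingleton (ZMod p) (oM.obj A).V a0))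
        ∘ ⇑(TensorProduct.lid (ZMod p) I'.V).symm := by
      funext x
      show TensorProduct.tmul (ZMod p) a0 x = _
      simp [TensorProduct.lid_symm_apply, LinearMap.rTensor_tmul,
        LinearMap.toSpanSingleton_apply, one_smul]
    rw [h3]
    exact h2.comp (TensorProduct.lid (ZMod p) I'.V).symm.injective
  set siso := (Rep.equivalenceModuleMonoidAlgebra (k := ZMod p) (G := G)).counitIso.app I
    with hsiso
  set smap : I ⟶ TT A := siso.inv ≫ tMf.map u with hsmap
  have hsinj : Function.Injective smap := by
    have hinv1 : Function.Injective siso.inv := by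
      intro a b hab
      have h5 := congrArg siso.hom hab
      simpa using h5
    exact Function.Injective.comp (show Function.Injective ⇑(tMf.map u) from huinj) hinv1
  haveI : Mono smap := (ModuleCat.mono_iff_injective smap).mpr hsinj
  haveI := hI
  set rmap : TT A ⟶ I := Injective.factorThru (𝟙 I) smap with hrmap
  have hrs : ∀ x, rmap (smap x) = x := by
    intro x
    have h6 := congrFun (congrArg (⇑) (Injective.comp_factorThru (𝟙 I) smap)) x
    exact h6
  apply ProjDimAux.hasProjDimLE_retract d smap rmap hrs
  exact ⟨fun i => TT (Q i), fun i => Tm (f i), Tm g,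
    fun i => hTproj _ (hQ i), hTsurj g hg, hTex _ _ he0,
    fun i => hTex _ _ (he i), fun i hi => hTsub _ (hb i hi)⟩

end
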